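/- Let n ≥ 1, let φ : ℝⁿ → ℝ be twice continuously differentiable with L-Lipschitz gradient and L_H-Lipschitz Hessian. Let x, s ∈ ℝⁿ with x⁺ = x + s, g ∈ ℝⁿ, H : ℝⁿ → ℝⁿ symmetric linear, κ_g, κ_H ≥ 0, η ∈ (0,1), θ ∈ (0,1), ε_f' > 0, σ_min > 0, σ ≥ σ_min, μ > 0, ε > 0, and set σ̄ = (2κ_g + κ_H + L + L_H)/(1 − θ/3). Let f(x), f(x⁺) ∈ ℝ with errors e = |f(x) − φ(x)| and e⁺ = |f(x⁺) − φ(x⁺)|. Suppose: (a) μ ≤ (1 − η)·ε / (1 + (1 − θ/3)·σ̄/σ_min); (b) the accuracy conditions ‖∇φ(x) − g‖ ≤ κ_g·max{μ/σ, ‖s‖²} and ‖(∇²φ(x) − H)s‖ ≤ κ_H·max{μ/σ, ‖s‖²} hold; (c) s satisfies the step conditions ⟨g, s⟩ + ⟨s, H s⟩ + σ‖s‖³ = 0 and ⟨s, H s⟩ + σ‖s‖³ ≥ 0, and the termination condition ‖g + H s + σ‖s‖·s‖ ≤ η·min{1, ‖s‖}·‖g‖; (d) the acceptance condition f(x) −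 f(x⁺) + 2ε_f' ≥ θ·(m(x) − m(x+s)) holds; and (e) ‖∇φ(x+s)‖ > ε. Then φ(x) − φ(x⁺) ≥ (θ/6)·(1 − η)^{3/2}·σ/(σ + (1 − θ/3)·σ̄)^{3/2}·‖∇φ(x+s)‖^{3/2} − e − e⁺ − 2ε_f', and in particular φ(x) − φ(x⁺) ≥ (θ/6)·(1 − η)^{3/2}·σ_min/(σ + (1 − θ/3)·σ̄)^{3/2}·‖∇φ(x+s)‖^{3/2} − e − e⁺ − 2ε_f'. -/

import Mathlib

set_option maxHeartbeats 4000000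


open RealInnerProductSpace


private lemma sarc_aux_key (κg κH L L_H η σ σmin μ ε c G ns t : ℝ)
    (hκg : 0 ≤ κg) (hκH : 0 ≤ κH) (hL0 : 0 ≤ L) (hLH0 : 0 ≤ L_H)
    (hη0 : 0 < η) (hη1 : η < 1) (hσmin : 0 < σmin) (hσ : σmin ≤ σ)
    (hμ : 0 < μ) (hε : 0 < ε)
    (hc : c = 2 * κg + κH + L + L_H)
    (hμle' : μ * (1 + c / σmin) ≤ (1 - η) * ε)
    (hns : 0 ≤ ns) (ht0 : 0 ≤ t) (ht1 : t ≤ 1) (htns : t ≤ ns)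
    (hGε : ε < G)
    (hGall : G ≤ L_H * ns ^ 2 + κH * max (μ / σ) (ns ^ 2) +
      κg * max (μ / σ) (ns ^ 2) +
      η * t * (κg * max (μ / σ) (ns ^ 2) + L * ns + G) + σ * ns ^ 2) :
    (1 - η) * G ≤ (σ + c) * ns ^ 2 := by
  have hσ0 : 0 < σ := lt_of_lt_of_le hσmin hσ
  have hG0 : 0 ≤ G := le_trans hε.le hGε.le
  have hc0 : 0 ≤ c := by rw [hc]; linarith
  have hηt1 : η * t ≤ 1 := by nlinarith
  have hηtns : η * t ≤ ns := by nlinarith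
  have hηt0 : 0 ≤ η * t := mul_nonneg hη0.le ht0
  have e1 : η * t * G ≤ η * G := by
    nlinarith [mul_nonneg (mul_nonneg hη0.le (sub_nonneg.mpr ht1)) hG0]
  have e3 : η * t * (L * ns) ≤ L * ns ^ 2 := by
    nlinarith [mul_nonneg (mul_nonneg hL0 hns) (sub_nonneg.mpr hηtns)]
  rcases le_total (μ / σ) (ns ^ 2) with hcase | hcase
  · rw [max_eq_right hcase] at hGall
    have e2 : η * t * (κg * ns ^ 2) ≤ κg * ns ^ 2 := by
      nlinarith [mul_nonneg (mul_nonneg hκg (sq_nonneg ns)) (sub_nonneg.mpr hηt1)]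
    rw [hc]; nlinarith
  · exfalso
    rw [max_eq_left hcase] at hGall
    have hM0 : (0 : ℝ) ≤ μ / σ := le_of_lt (div_pos hμ hσ0)
    have e2 : η * t * (κg * (μ / σ)) ≤ κg * (μ / σ) := by
      nlinarith [mul_nonneg (mul_nonneg hκg hM0) (sub_nonneg.mpr hηt1)]
    have hσs2 : σ * ns ^ 2 ≤ μ := by
      have := (le_div_iff₀ hσ0).mp hcase
      linarith
    have hμσ : μ / σ ≤ μ / σmin := div_le_div_of_nonneg_left hμ.le hσmin hσ
    have hLHM := mul_le_mul_of_nonneg_left hcase hLH0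
    have hLM := mul_le_mul_of_nonneg_left hcase hL0
    have hGc : (1 - η) * G ≤ c * (μ / σ) + σ * ns ^ 2 := by
      rw [hc]; nlinarith
    have hcM : c * (μ / σ) ≤ c * (μ / σmin) := mul_le_mul_of_nonneg_left hμσ hc0
    have hGεη : (1 - η) * ε < (1 - η) * G := by
      apply mul_lt_mul_of_pos_left hGε; linarith
    have hring : c * (μ / σmin) = μ * (c / σmin) := by ring
    nlinarith

private lemma sarc_aux_pow (η σ c G ns : ℝ) (hη1 : η ≤ 1)
    (hσc : 0 < σ + c) (hns : 0 ≤ ns) (hG0 : 0 ≤ G)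
    (hkey : (1 - η) * G ≤ (σ + c) * ns ^ 2) :
    (1 - η) ^ ((3 : ℝ) / 2) * G ^ ((3 : ℝ) / 2) / (σ + c) ^ ((3 : ℝ) / 2) ≤ ns ^ 3 := by
  have h1η : (0 : ℝ) ≤ 1 - η := by linarith
  have hkey2 : (1 - η) * G / (σ + c) ≤ ns ^ 2 := by
    rw [div_le_iff₀ hσc]; linarith
  have h0 : (0 : ℝ) ≤ (1 - η) * G / (σ + c) := by positivity
  have hmono := Real.rpow_le_rpow h0 hkey2 (by norm_num : (0 : ℝ) ≤ 3 / 2)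
  have hlhs : ((1 - η) * G / (σ + c)) ^ ((3 : ℝ) / 2)
      = (1 - η) ^ ((3 : ℝ) / 2) * G ^ ((3 : ℝ) / 2) / (σ + c) ^ ((3 : ℝ) / 2) := by
    rw [Real.div_rpow (by positivity) hσc.le, Real.mul_rpow h1η hG0]
  have hrhs : (ns ^ 2) ^ ((3 : ℝ) / 2) = ns ^ 3 := by
    rw [← Real.rpow_natCast ns 2, ← Real.rpow_mul hns]
    norm_num
  rw [hlhs, hrhs] at hmono
  exact hmono

private lemma sarc_aux_final (θ η σ σmin c G ns φd e1 e2 ef : ℝ)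
    (hθ0 : 0 < θ) (hη1 : η ≤ 1) (hσmin : 0 < σmin) (hσ : σmin ≤ σ)
    (hσc : 0 < σ + c) (hns : 0 ≤ ns) (hG0 : 0 ≤ G)
    (hkey : (1 - η) * G ≤ (σ + c) * ns ^ 2)
    (hφd : φd ≥ θ * (σ / 6 * ns ^ 3) - e1 - e2 - 2 * ef) :
    φd ≥ (θ / 6) * (1 - η) ^ ((3 : ℝ) / 2) * (σ / (σ + c) ^ ((3 : ℝ) / 2)) *
        G ^ ((3 : ℝ) / 2) - e1 - e2 - 2 * ef ∧
      φd ≥ (θ / 6) * (1 - η) ^ ((3 : ℝ) / 2) * (σmin / (σ + c) ^ ((3 : ℝ) / 2)) *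
        G ^ ((3 : ℝ) / 2) - e1 - e2 - 2 * ef := by
  have hσ0 : 0 < σ := lt_of_lt_of_le hσmin hσ
  have hrpow := sarc_aux_pow η σ c G ns hη1 hσc hns hG0 hkey
  have hfirst : φd ≥ (θ / 6) * (1 - η) ^ ((3 : ℝ) / 2) *
      (σ / (σ + c) ^ ((3 : ℝ) / 2)) * G ^ ((3 : ℝ) / 2) - e1 - e2 - 2 * ef := by
    have hmul := mul_le_mul_of_nonneg_left hrpow
      (show (0 : ℝ) ≤ θ * σ / 6 by positivity)
    have heq : θ * σ / 6 * ((1 - η) ^ ((3 : ℝ) / 2) * G ^ ((3 : ℝ) / 2) /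
        (σ + c) ^ ((3 : ℝ) / 2))
        = (θ / 6) * (1 - η) ^ ((3 : ℝ) / 2) * (σ / (σ + c) ^ ((3 : ℝ) / 2)) *
          G ^ ((3 : ℝ) / 2) := by ring
    rw [heq] at hmul
    nlinarith
  refine ⟨hfirst, le_trans ?_ hfirst⟩
  have hd : (0 : ℝ) < (σ + c) ^ ((3 : ℝ) / 2) := Real.rpow_pos_of_pos hσc _
  have h1η : (0 : ℝ) ≤ 1 - η := by linarith
  gcongr

/-- Minimum improvement achieved by true and successful iterations (Lemma 7):
on a true, accepted iteration with `‖∇φ(x+s)‖ > ε`,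
`φ(x) − φ(x⁺) ≥ (θ/6)(1 − η)^{3/2} σ/(σ + (1 − θ/3)σ̄)^{3/2} ‖∇φ(x+s)‖^{3/2}
 − e − e⁺ − 2ε_f'`, and the same bound with `σ` replaced by `σ_min` in the
numerator. -/
theorem sarc_min_improvement (n : ℕ) (hn : 1 ≤ n)
    (φ : EuclideanSpace ℝ (Fin n) → ℝ) (hφ : ContDiff ℝ 2 φ)
    (Hess : EuclideanSpace ℝ (Fin n) →
      EuclideanSpace ℝ (Fin n) →L[ℝ] EuclideanSpace ℝ (Fin n))
    (hHess : ∀ y, HasFDerivAt (gradient φ) (Hess y) y)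
    (L L_H : ℝ)
    (hL : ∀ y z, ‖gradient φ y - gradient φ z‖ ≤ L * ‖y - z‖)
    (hLH : ∀ y z, ‖Hess y - Hess z‖ ≤ L_H * ‖y - z‖)
    (x s g : EuclideanSpace ℝ (Fin n))
    (H : EuclideanSpace ℝ (Fin n) →L[ℝ] EuclideanSpace ℝ (Fin n))
    (hHsym : ∀ u v : EuclideanSpace ℝ (Fin n), ⟪H u, v⟫ = ⟪u, H v⟫)
    (κg κH η θ εf' σmin σ μ ε σbar fx fxp : ℝ)
    (hκg : 0 ≤ κg) (hκH : 0 ≤ κH)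
    (hη : η ∈ Set.Ioo (0 : ℝ) 1) (hθ : θ ∈ Set.Ioo (0 : ℝ) 1)
    (hεf' : 0 < εf') (hσmin : 0 < σmin) (hσ : σ ≥ σmin) (hμ : 0 < μ) (hε : 0 < ε)
    (hσbar : σbar = (2 * κg + κH + L + L_H) / (1 - θ / 3))
    (hμle : μ ≤ (1 - η) * ε / (1 + (1 - θ / 3) * σbar / σmin))
    (hacc_g : ‖gradient φ x - g‖ ≤ κg * max (μ / σ) (‖s‖ ^ 2))
    (hacc_H : ‖(Hess x - H) s‖ ≤ κH * max (μ / σ) (‖s‖ ^ 2))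
    (hstep1 : ⟪g, s⟫ + ⟪s, H s⟫ + σ * ‖s‖ ^ 3 = 0)
    (hstep2 : ⟪s, H s⟫ + σ * ‖s‖ ^ 3 ≥ 0)
    (hterm : ‖g + H s + (σ * ‖s‖) • s‖ ≤ η * min 1 ‖s‖ * ‖g‖)
    (haccept : fx - fxp + 2 * εf' ≥
      θ * (-(⟪g, s⟫ + (1 / 2) * ⟪s, H s⟫ + (σ / 3) * ‖s‖ ^ 3)))
    (hgrad : ‖gradient φ (x + s)‖ > ε) :
    φ x - φ (x + s) ≥
        (θ / 6) * (1 - η) ^ ((3 : ℝ) / 2) *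
          (σ / (σ + (1 - θ / 3) * σbar) ^ ((3 : ℝ) / 2)) *
          ‖gradient φ (x + s)‖ ^ ((3 : ℝ) / 2)
        - |fx - φ x| - |fxp - φ (x + s)| - 2 * εf' ∧
      φ x - φ (x + s) ≥
        (θ / 6) * (1 - η) ^ ((3 : ℝ) / 2) *
          (σmin / (σ + (1 - θ / 3) * σbar) ^ ((3 : ℝ) / 2)) *
          ‖gradient φ (x + s)‖ ^ ((3 : ℝ) / 2)
        - |fx - φ x| - |fxp - φ (x + s)| - 2 * εf' := by
  obtain ⟨hη0, hη1⟩ := hη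
  obtain ⟨hθ0, hθ1⟩ := hθ
  have hθ3 : (0:ℝ) < 1 - θ / 3 := by linarith
  have hc_eq : (1 - θ / 3) * σbar = 2 * κg + κH + L + L_H := by
    rw [hσbar, mul_comm, div_mul_cancel₀ _ (ne_of_gt hθ3)]
  have hσ0 : 0 < σ := lt_of_lt_of_le hσmin hσ
  have hunit : ‖(EuclideanSpace.single (⟨0, hn⟩ : Fin n) (1:ℝ)) - 0‖ = 1 := by
    simp [EuclideanSpace.norm_single]
  have hL0 : 0 ≤ L := by
    have := hL (EuclideanSpace.single (⟨0, hn⟩ : Fin n) (1:ℝ)) 0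
    rw [hunit, mul_one] at this
    exact le_trans (norm_nonneg _) this
  have hLH0 : 0 ≤ L_H := by
    have := hLH (EuclideanSpace.single (⟨0, hn⟩ : Fin n) (1:ℝ)) 0
    rw [hunit, mul_one] at this
    exact le_trans (norm_nonneg _) this
  have hc0 : (0:ℝ) ≤ 2 * κg + κH + L + L_H := by linarith
  have hns : 0 ≤ ‖s‖ := norm_nonneg s
  have hG0 : 0 ≤ ‖gradient φ (x + s)‖ := norm_nonneg _
  -- Taylor bound on the gradient along the segment
  have hA : ‖gradient φ (x + s) - gradient φ x - Hess x s‖ ≤ L_H * ‖s‖ ^ 2 := by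
    have hseg : ∀ y ∈ segment ℝ x (x + s), ‖Hess y - Hess x‖ ≤ L_H * ‖s‖ := by
      intro y hy
      obtain ⟨a, b, ha, hb, hab, hy⟩ := hy
      have hyx : y - x = b • s := by
        rw [← hy, show a = 1 - b by linarith]
        module
      have h1 : ‖y - x‖ ≤ ‖s‖ := by
        rw [hyx, norm_smul, Real.norm_eq_abs, abs_of_nonneg hb]
        nlinarith
      calc ‖Hess y - Hess x‖ ≤ L_H * ‖y - x‖ := hLH y x
        _ ≤ L_H * ‖s‖ := mul_le_mul_of_nonneg_left h1 hLH0
    have h2 := (convex_segment x (x + s)).norm_image_sub_le_of_norm_hasFDerivWithin_le'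
      (f := gradient φ) (f' := Hess) (φ := Hess x) (C := L_H * ‖s‖)
      (fun y _ => (hHess y).hasFDerivWithinAt) hseg
      (left_mem_segment ℝ x (x + s)) (right_mem_segment ℝ x (x + s))
    have hxs : x + s - x = s := by abel
    rw [hxs] at h2
    calc ‖gradient φ (x + s) - gradient φ x - Hess x s‖ ≤ L_H * ‖s‖ * ‖s‖ := h2
      _ = L_H * ‖s‖ ^ 2 := by ring
  -- decomposition of the gradient at x + s
  have hdecomp : gradient φ (x + s) =
      (gradient φ (x + s) - gradient φ x - Hess x s) + (Hess x - H) s +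
      (gradient φ x - g) + (g + H s + (σ * ‖s‖) • s) - (σ * ‖s‖) • s := by
    simp only [ContinuousLinearMap.sub_apply]
    abel
  have hsm : ‖(σ * ‖s‖) • s‖ = σ * ‖s‖ ^ 2 := by
    rw [norm_smul, Real.norm_eq_abs, abs_of_nonneg (mul_nonneg hσ0.le hns)]; ring
  have hGle : ‖gradient φ (x + s)‖ ≤
      ‖gradient φ (x + s) - gradient φ x - Hess x s‖ + ‖(Hess x - H) s‖ +
      ‖gradient φ x - g‖ + ‖g + H s + (σ * ‖s‖) • s‖ + σ * ‖s‖ ^ 2 := by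
    calc ‖gradient φ (x + s)‖
        = ‖(gradient φ (x + s) - gradient φ x - Hess x s) + (Hess x - H) s +
        (gradient φ x - g) + (g + H s + (σ * ‖s‖) • s) - (σ * ‖s‖) • s‖ := by
          rw [← hdecomp]
      _ ≤ ‖(gradient φ (x + s) - gradient φ x - Hess x s) + (Hess x - H) s +
        (gradient φ x - g) + (g + H s + (σ * ‖s‖) • s)‖ + ‖(σ * ‖s‖) • s‖ :=
          norm_sub_le _ _
      _ ≤ ‖(gradient φ (x + s) - gradient φ x - Hess x s) + (Hess x - H) s +
        (gradient φ x - g)‖ + ‖g + H s + (σ * ‖s‖) • s‖ + ‖(σ * ‖s‖) • s‖ :=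
          by linarith [norm_add_le (gradient φ (x + s) - gradient φ x - Hess x s + (Hess x - H) s + (gradient φ x - g)) (g + H s + (σ * ‖s‖) • s)]
      _ ≤ ‖(gradient φ (x + s) - gradient φ x - Hess x s) + (Hess x - H) s‖ +
        ‖gradient φ x - g‖ + ‖g + H s + (σ * ‖s‖) • s‖ + ‖(σ * ‖s‖) • s‖ :=
          by linarith [norm_add_le (gradient φ (x + s) - gradient φ x - Hess x s + (Hess x - H) s) (gradient φ x - g)]
      _ ≤ ‖gradient φ (x + s) - gradient φ x - Hess x s‖ + ‖(Hess x - H) s‖ +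
        ‖gradient φ x - g‖ + ‖g + H s + (σ * ‖s‖) • s‖ + ‖(σ * ‖s‖) • s‖ :=
          by linarith [norm_add_le (gradient φ (x + s) - gradient φ x - Hess x s) ((Hess x - H) s)]
      _ = _ := by rw [hsm]
  -- bound on ‖g‖
  have hgbd : ‖g‖ ≤ κg * max (μ / σ) (‖s‖ ^ 2) + L * ‖s‖ + ‖gradient φ (x + s)‖ := by
    have h1 : ‖gradient φ x - gradient φ (x + s)‖ ≤ L * ‖s‖ := by
      have h2 := hL x (x + s)
      have hxs : x - (x + s) = -s := by abel
      rwa [hxs, norm_neg] at h2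
    calc ‖g‖ = ‖(g - gradient φ x) + (gradient φ x - gradient φ (x + s)) +
        gradient φ (x + s)‖ := by congr 1; abel
      _ ≤ ‖(g - gradient φ x) + (gradient φ x - gradient φ (x + s))‖ +
          ‖gradient φ (x + s)‖ := norm_add_le _ _
      _ ≤ ‖g - gradient φ x‖ + ‖gradient φ x - gradient φ (x + s)‖ +
          ‖gradient φ (x + s)‖ := by
            linarith [norm_add_le (g - gradient φ x) (gradient φ x - gradient φ (x + s))]
      _ ≤ _ := by
          rw [norm_sub_rev]
          exact add_le_add (add_le_add hacc_g h1) le_rfl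
  have htmin0 : 0 ≤ min 1 ‖s‖ := le_min (by norm_num) hns
  have hDg : ‖g + H s + (σ * ‖s‖) • s‖ ≤ η * min 1 ‖s‖ *
      (κg * max (μ / σ) (‖s‖ ^ 2) + L * ‖s‖ + ‖gradient φ (x + s)‖) :=
    le_trans hterm
      (mul_le_mul_of_nonneg_left hgbd (mul_nonneg hη0.le htmin0))
  have hGall : ‖gradient φ (x + s)‖ ≤ L_H * ‖s‖ ^ 2 +
      κH * max (μ / σ) (‖s‖ ^ 2) + κg * max (μ / σ) (‖s‖ ^ 2) +
      η * min 1 ‖s‖ * (κg * max (μ / σ) (‖s‖ ^ 2) + L * ‖s‖ +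
        ‖gradient φ (x + s)‖) + σ * ‖s‖ ^ 2 := by
    linarith [hGle, hA, hacc_H, hacc_g, hDg]
  -- threshold inequality for μ
  have hμle' : μ * (1 + (2 * κg + κH + L + L_H) / σmin) ≤ (1 - η) * ε := by
    rw [hc_eq] at hμle
    have hden : 0 < 1 + (2 * κg + κH + L + L_H) / σmin := by positivity
    rw [le_div_iff₀ hden] at hμle
    exact hμle
  -- key inequality
  have key := sarc_aux_key κg κH L L_H η σ σmin μ ε
    (2 * κg + κH + L + L_H) ‖gradient φ (x + s)‖ ‖s‖ (min 1 ‖s‖)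
    hκg hκH hL0 hLH0 hη0 hη1 hσmin hσ hμ hε rfl hμle' hns htmin0
    (min_le_left _ _) (min_le_right _ _) hgrad hGall
  -- model decrease and function decrease
  have hmdec : -(⟪g, s⟫ + (1 / 2) * ⟪s, H s⟫ + (σ / 3) * ‖s‖ ^ 3) ≥ σ / 6 * ‖s‖ ^ 3 := by
    linarith [hstep1, hstep2]
  have hfd : fx - fxp + 2 * εf' ≥ θ * (σ / 6 * ‖s‖ ^ 3) := by
    have h3 := mul_le_mul_of_nonneg_left hmdec (le_of_lt hθ0)
    linarith [haccept]
  have hφd : φ x - φ (x + s) ≥ θ * (σ / 6 * ‖s‖ ^ 3)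
      - |fx - φ x| - |fxp - φ (x + s)| - 2 * εf' := by
    have h1 := le_abs_self (fx - φ x)
    have h2 := neg_abs_le (fxp - φ (x + s))
    linarith
  have hσc : 0 < σ + (2 * κg + κH + L + L_H) := by linarith
  have hfin := sarc_aux_final θ η σ σmin (2 * κg + κH + L + L_H)
    ‖gradient φ (x + s)‖ ‖s‖ (φ x - φ (x + s)) |fx - φ x| |fxp - φ (x + s)| εf'
    hθ0 hη1.le hσmin hσ hσc hns hG0 key hφd
  rw [hc_eq]
  exact hfin
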